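/- Let f̃ be a smoothing function of f satisfying |∇_μ f̃(x,μ)| ≤ κ μ^{-q} for all x in a bounded set 𝒳 and μ ∈ (0, μ̄], where q ∈ [0,1), together with lim_{z→x, μ↓0} f̃(z,μ) = f(x). Then |f̃(x,μ) - f(x)| ≤ (κ/(1-q)) μ^{1-q} for all x ∈ 𝒳 and μ ∈ (0, μ̄]. In particular |f̃(x,μ) - f(x)| → 0 uniformly as μ → 0. -/

import Mathlib

open Real Filter Set

theorem smoothing_error_bound (d : ℕ) (X : Set (EuclideanSpace ℝ (Fin d)))
    (hX : Bornology.IsBounded X)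
    (f : EuclideanSpace ℝ (Fin d) → ℝ) (hf : Continuous f)
    (ft : EuclideanSpace ℝ (Fin d) → ℝ → ℝ)
    (μbar κ q : ℝ) (hμbar : 0 < μbar) (hκ : 0 < κ) (hq0 : 0 ≤ q) (hq1 : q < 1)
    (g : EuclideanSpace ℝ (Fin d) → ℝ → ℝ)
    (hderiv : ∀ x ∈ X, ∀ μ ∈ Set.Ioc 0 μbar,
      HasDerivWithinAt (ft x) (g x μ) (Set.Ioc 0 μbar) μ)
    (hgbound : ∀ x ∈ X, ∀ μ ∈ Set.Ioc 0 μbar, |g x μ| ≤ κ * μ ^ (-q))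
    (hconv : ∀ x : EuclideanSpace ℝ (Fin d),
      Tendsto (fun p : EuclideanSpace ℝ (Fin d) × ℝ => ft p.1 p.2)
        ((nhds x) ×ˢ (nhdsWithin 0 (Set.Ioi 0))) (nhds (f x))) :
    ∀ x ∈ X, ∀ μ ∈ Set.Ioc 0 μbar, |ft x μ - f x| ≤ κ / (1 - q) * μ ^ (1 - q) := by
  intro x hx μ hμ
  have h1q : (0:ℝ) < 1 - q := by linarith
  set D : Set ℝ := Set.Ioc 0 μbar with hD
  have hint : interior D = Set.Ioo 0 μbar := interior_Ioc
  set G : ℝ → ℝ := fun t => κ / (1 - q) * t ^ (1 - q) with hG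
  -- derivative of G on positive reals
  have hGderiv : ∀ t : ℝ, 0 < t → HasDerivAt G (κ * t ^ (-q)) t := by
    intro t ht
    have h := (Real.hasDerivAt_rpow_const (p := 1 - q) (Or.inl ht.ne')).const_mul (κ / (1 - q))
    convert h using 1
    case e'_4 => rfl
    case e'_5 => rfl
    rw [show 1 - q - 1 = -q by ring]
    field_simp
  -- continuity of ft x on D
  have hcont : ContinuousOn (ft x) D := fun t ht => (hderiv x hx t ht).continuousWithinAt
  have hGcont : ContinuousOn G D := by
    apply ContinuousOn.mul continuousOn_const
    intro t ht
    exact (Real.continuousAt_rpow_const t (1 - q) (Or.inl (ne_of_gt ht.1))).continuousWithinAt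
  -- F + G is monotone on D
  have hmono : MonotoneOn (fun t => ft x t + G t) D := by
    apply monotoneOn_of_hasDerivWithinAt_nonneg (convex_Ioc 0 μbar)
      (hcont.add hGcont) (f' := fun t => g x t + κ * t ^ (-q))
    · intro t ht
      rw [hint] at ht ⊢
      exact ((hderiv x hx t (Set.Ioo_subset_Ioc_self ht)).mono Set.Ioo_subset_Ioc_self).add
        ((hGderiv t ht.1).hasDerivWithinAt)
    · intro t ht
      rw [hint] at ht
      have := hgbound x hx t (Set.Ioo_subset_Ioc_self ht)
      have := abs_le.mp this
      linarith [this.1]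
  -- F - G is antitone on D
  have hanti : AntitoneOn (fun t => ft x t - G t) D := by
    apply antitoneOn_of_hasDerivWithinAt_nonpos (convex_Ioc 0 μbar)
      (hcont.sub hGcont) (f' := fun t => g x t - κ * t ^ (-q))
    · intro t ht
      rw [hint] at ht ⊢
      exact ((hderiv x hx t (Set.Ioo_subset_Ioc_self ht)).mono Set.Ioo_subset_Ioc_self).sub
        ((hGderiv t ht.1).hasDerivWithinAt)
    · intro t ht
      rw [hint] at ht
      have := abs_le.mp (hgbound x hx t (Set.Ioo_subset_Ioc_self ht))
      linarith [this.2]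
  -- limits as ε → 0+
  have hFlim : Tendsto (fun t => ft x t) (nhdsWithin 0 (Set.Ioi 0)) (nhds (f x)) := by
    have : Tendsto (fun t : ℝ => ((x : EuclideanSpace ℝ (Fin d)), t))
        (nhdsWithin 0 (Set.Ioi 0)) ((nhds x) ×ˢ (nhdsWithin 0 (Set.Ioi 0))) :=
      Tendsto.prodMk tendsto_const_nhds tendsto_id
    exact (hconv x).comp this
  have hGlim : Tendsto G (nhdsWithin 0 (Set.Ioi 0)) (nhds 0) := by
    have h0 : ContinuousAt (fun t : ℝ => t ^ (1 - q)) 0 :=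
      Real.continuousAt_rpow_const 0 (1 - q) (Or.inr h1q.le)
    have : Tendsto (fun t : ℝ => t ^ (1 - q)) (nhdsWithin 0 (Set.Ioi 0)) (nhds 0) := by
      have := h0.tendsto.mono_left (nhdsWithin_le_nhds (s := Set.Ioi 0))
      rwa [Real.zero_rpow (ne_of_gt h1q)] at this
    have := this.const_mul (κ / (1 - q))
    simpa using this
  have hev : ∀ᶠ ε in nhdsWithin 0 (Set.Ioi 0), ε ∈ Set.Ioo 0 μ := by
    apply Ioo_mem_nhdsGT_of_mem
    exact ⟨le_refl 0, hμ.1⟩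
  have hμD : μ ∈ D := hμ
  -- upper bound: ft x μ - G μ ≤ f x
  have hub : ft x μ - G μ ≤ f x := by
    have hlim : Tendsto (fun t => ft x t - G t) (nhdsWithin 0 (Set.Ioi 0)) (nhds (f x)) := by
      simpa using hFlim.sub hGlim
    refine ge_of_tendsto hlim ?_
    filter_upwards [hev] with ε hε
    exact hanti ⟨hε.1, hε.2.le.trans hμ.2⟩ hμD hε.2.le
  have hlb : f x ≤ ft x μ + G μ := by
    have hlim : Tendsto (fun t => ft x t + G t) (nhdsWithin 0 (Set.Ioi 0)) (nhds (f x)) := by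
      simpa using hFlim.add hGlim
    refine le_of_tendsto hlim ?_
    filter_upwards [hev] with ε hε
    exact hmono ⟨hε.1, hε.2.le.trans hμ.2⟩ hμD hε.2.le
  have hGμ : G μ = κ / (1 - q) * μ ^ (1 - q) := rfl
  rw [abs_le]
  constructor <;> linarith
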